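/- Chiral symmetry of the symmetrized unitary: let d, n ≥ 1, let H : (Fin d → ℝ) → ℝ → Matrix n n ℂ be continuous with each H(k,t) Hermitian, and let C be an n×n unitary matrix such that C·H(k,t)·C⁻¹ = -H(k,1-t) for all k and t. Let U(k,t) be the time-evolution operator of H, and define the symmetrized unitary U_S(k,t) = U(k,(1+t)/2) · (U(k,(1-t)/2))ᴴ. Then C·U_S(k,t)·C⁻¹ = (U_S(k,t))ᴴ for all k and t. -/

import Mathlib

open Matrix

attribute [local instance] Matrix.normedAddCommGroup Matrix.normedSpace

/-- Matrix multiplication as a continuous ℝ-bilinear map. -/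
noncomputable def mulCLM (n : ℕ) :
    Matrix (Fin n) (Fin n) ℂ →L[ℝ] Matrix (Fin n) (Fin n) ℂ →L[ℝ] Matrix (Fin n) (Fin n) ℂ :=
  LinearMap.toContinuousLinearMap
    { toFun := fun A => LinearMap.toContinuousLinearMap
        ((LinearMap.mul ℝ (Matrix (Fin n) (Fin n) ℂ)) A)
      map_add' := by intro A B; ext x; simp [add_mul]
      map_smul' := by intro r A; ext x; simp [smul_mul_assoc] }

@[simp] lemma mulCLM_apply {n : ℕ} (A B : Matrix (Fin n) (Fin n) ℂ) : mulCLM n A B = A * B := rfl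

lemma HasDerivAt.matmul {n : ℕ} {f g : ℝ → Matrix (Fin n) (Fin n) ℂ}
    {f' g' : Matrix (Fin n) (Fin n) ℂ} {t : ℝ}
    (hf : HasDerivAt f f' t) (hg : HasDerivAt g g' t) :
    HasDerivAt (fun s => f s * g s) (f' * g t + f t * g') t := by
  letI : NormedAddCommGroup (Matrix (Fin n) (Fin n) ℂ →L[ℝ] Matrix (Fin n) (Fin n) ℂ) :=
    ContinuousLinearMap.toNormedAddCommGroup
  letI : NormedSpace ℝ (Matrix (Fin n) (Fin n) ℂ →L[ℝ] Matrix (Fin n) (Fin n) ℂ) :=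
    ContinuousLinearMap.toNormedSpace
  have hc : HasDerivAt (fun s => mulCLM n (f s)) (mulCLM n f') t :=
    (mulCLM n).hasFDerivAt.comp_hasDerivAt t hf
  exact hc.clm_apply hg

/-- conjTranspose as a continuous ℝ-linear map. -/
noncomputable def ctCLM (n : ℕ) :
    Matrix (Fin n) (Fin n) ℂ →L[ℝ] Matrix (Fin n) (Fin n) ℂ :=
  LinearMap.toContinuousLinearMap
    { toFun := fun A => Aᴴ
      map_add' := fun A B => conjTranspose_add A B
      map_smul' := by
        intro r A
        ext i j
        simp [conjTranspose_apply] }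

lemma HasDerivAt.matct {n : ℕ} {f : ℝ → Matrix (Fin n) (Fin n) ℂ}
    {f' : Matrix (Fin n) (Fin n) ℂ} {t : ℝ} (hf : HasDerivAt f f' t) :
    HasDerivAt (fun s => (f s)ᴴ) f'ᴴ t :=
  (ctCLM n).hasFDerivAt.comp_hasDerivAt t hf

/-- chiral symmetry of the symmetrized unitary
`U_S(k,t) = U(k,(1+t)/2) (U(k,(1-t)/2))ᴴ`: it satisfies `C U_S(k,t) C⁻¹ = (U_S(k,t))ᴴ`. -/
theorem symmetrized_unitary_chiral_symmetry {d n : ℕ} (hd : 1 ≤ d) (hn : 1 ≤ n)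
    (H : (Fin d → ℝ) → ℝ → Matrix (Fin n) (Fin n) ℂ)
    (hHcont : Continuous fun p : (Fin d → ℝ) × ℝ => H p.1 p.2)
    (hHherm : ∀ k t, (H k t).IsHermitian)
    (C : Matrix (Fin n) (Fin n) ℂ) (hC : C ∈ Matrix.unitaryGroup (Fin n) ℂ)
    (hCH : ∀ k t, C * H k t * C⁻¹ = -(H k (1 - t)))
    (U : (Fin d → ℝ) → ℝ → Matrix (Fin n) (Fin n) ℂ)
    (hU0 : ∀ k, U k 0 = 1)
    (hUde : ∀ k t, HasDerivAt (U k) ((-Complex.I) • (H k t * U k t)) t)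
    (US : (Fin d → ℝ) → ℝ → Matrix (Fin n) (Fin n) ℂ)
    (hUS : ∀ k t, US k t = U k ((1 + t) / 2) * (U k ((1 - t) / 2))ᴴ) :
    ∀ k t, C * US k t * C⁻¹ = (US k t)ᴴ := by
  intro k t
  have hCinv : C⁻¹ = Cᴴ :=
    Matrix.inv_eq_left_inv (by
      simpa [Matrix.star_eq_conjTranspose] using (Unitary.mem_iff.mp hC).1)
  have hCC : Cᴴ * C = 1 := by
    simpa [Matrix.star_eq_conjTranspose] using (Unitary.mem_iff.mp hC).1
  have hCC' : C * Cᴴ = 1 := by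
    simpa [Matrix.star_eq_conjTranspose] using (Unitary.mem_iff.mp hC).2
  have hcc1 : ∀ X : Matrix (Fin n) (Fin n) ℂ, Cᴴ * (C * X) = X := by
    intro X; rw [← mul_assoc, hCC, one_mul]
  have hcc2 : ∀ X : Matrix (Fin n) (Fin n) ℂ, C * (Cᴴ * X) = X := by
    intro X; rw [← mul_assoc, hCC', one_mul]
  -- unitarity of U
  have key1 : ∀ s, (U k s)ᴴ * U k s = 1 := by
    intro s
    have hD : ∀ r, HasDerivAt (fun s => (U k s)ᴴ * U k s) 0 r := by
      intro r
      have h1 := ((hUde k r).matct).matmul (hUde k r)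
      convert h1 using 1
      rw [Matrix.conjTranspose_smul, Matrix.conjTranspose_mul, (hHherm k r).eq]
      simp only [star_neg, Complex.star_def, Complex.conj_I, neg_neg,
        Matrix.smul_mul, Matrix.mul_smul, mul_assoc, neg_smul]
      simp
    have := is_const_of_deriv_eq_zero (𝕜 := ℝ)
      (f := fun s => (U k s)ᴴ * U k s)
      (fun x => (hD x).differentiableAt) (fun x => (hD x).deriv) s 0
    simpa [hU0 k] using this
  have key1' : ∀ s, U k s * (U k s)ᴴ = 1 := fun s =>
    mul_eq_one_comm.mp (key1 s)
  -- the intertwining identity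
  have key2 : ∀ s, C * U k s * C⁻¹ = U k (1 - s) * (U k 1)ᴴ := by
    intro s
    set W : ℝ → Matrix (Fin n) (Fin n) ℂ := fun r => U k (1 - r) * (U k 1)ᴴ with hW
    set V : ℝ → Matrix (Fin n) (Fin n) ℂ := fun r => C * U k r * C⁻¹ with hV
    have hD : ∀ r, HasDerivAt (fun r => (W r)ᴴ * V r) 0 r := by
      intro r
      have hh : HasDerivAt (fun x : ℝ => 1 - x) (-1) r := by
        simpa using (hasDerivAt_id r).const_sub 1
      have hWd : HasDerivAt (fun r => U k (1 - r))
          ((-1 : ℝ) • ((-Complex.I) • (H k (1 - r) * U k (1 - r)))) r :=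
        (hUde k (1 - r)).scomp r hh
      have hWm := hWd.matmul (hasDerivAt_const r ((U k 1)ᴴ))
      have hVd := ((hasDerivAt_const r C).matmul (hUde k r)).matmul
        (hasDerivAt_const r C⁻¹)
      have h1 := (hWm.matct).matmul hVd
      convert h1 using 1
      have hHt : H k r = -(Cᴴ * (H k (1 - r) * C)) := by
        have h3 : Cᴴ * (C * H k r * C⁻¹) * C = Cᴴ * (-(H k (1 - r))) * C := by
          rw [hCH k r]
        rw [hCinv] at h3
        simp only [mul_assoc, hcc1, hCC, mul_one, Matrix.neg_mul, Matrix.mul_neg] at h3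
        exact h3
      rw [hHt, hCinv]
      simp only [Matrix.conjTranspose_mul, Matrix.conjTranspose_smul,
        Matrix.conjTranspose_conjTranspose, (hHherm k (1 - r)).eq,
        star_neg, Complex.star_def, Complex.conj_I, star_trivial,
        Matrix.smul_mul, Matrix.mul_smul, Matrix.mul_neg, Matrix.neg_mul,
        smul_neg, neg_smul, neg_neg, one_smul, mul_assoc, hcc1, hcc2,
        zero_mul, mul_zero, add_zero, zero_add]
      exact (neg_add_cancel _).symm
    have hconst := is_const_of_deriv_eq_zero (𝕜 := ℝ)
      (f := fun r => (W r)ᴴ * V r)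
      (fun x => (hD x).differentiableAt) (fun x => (hD x).deriv) s 0
    have hD0 : (W 0)ᴴ * V 0 = 1 := by
      simp [hW, hV, hU0 k, Matrix.conjTranspose_mul, Matrix.conjTranspose_conjTranspose,
        mul_assoc, key1 1, key1' 1, hCinv, hCC']
    have hWV : (W s)ᴴ * V s = 1 := by rw [hconst]; exact hD0
    have hWW : W s * (W s)ᴴ = 1 := by
      simp only [hW, Matrix.conjTranspose_mul, Matrix.conjTranspose_conjTranspose]
      calc U k (1 - s) * (U k 1)ᴴ * (U k 1 * (U k (1 - s))ᴴ)
          = U k (1 - s) * ((U k 1)ᴴ * U k 1) * (U k (1 - s))ᴴ := by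
            simp [mul_assoc]
        _ = 1 := by rw [key1 1]; simp [key1' (1 - s)]
    calc V s = (W s * (W s)ᴴ) * V s := by rw [hWW, one_mul]
      _ = W s * ((W s)ᴴ * V s) := by rw [mul_assoc]
      _ = W s := by rw [hWV, mul_one]
  -- assemble
  have e1 : (1 : ℝ) - (1 + t) / 2 = (1 - t) / 2 := by ring
  have e2 : (1 : ℝ) - (1 - t) / 2 = (1 + t) / 2 := by ring
  have k2a := key2 ((1 + t) / 2)
  have k2b := key2 ((1 - t) / 2)
  rw [e1] at k2a
  rw [e2] at k2b
  rw [hUS k t]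
  have expand : C * (U k ((1 + t) / 2) * (U k ((1 - t) / 2))ᴴ) * C⁻¹
      = (C * U k ((1 + t) / 2) * C⁻¹) * (C * (U k ((1 - t) / 2))ᴴ * C⁻¹) := by
    rw [hCinv]
    simp only [mul_assoc]
    rw [← mul_assoc Cᴴ C, hCC, one_mul]
  rw [expand, k2a]
  have hconj : C * (U k ((1 - t) / 2))ᴴ * C⁻¹ = (C * U k ((1 - t) / 2) * C⁻¹)ᴴ := by
    rw [hCinv]
    simp [Matrix.conjTranspose_mul, Matrix.conjTranspose_conjTranspose, mul_assoc]
  rw [hconj, k2b]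
  rw [Matrix.conjTranspose_mul, Matrix.conjTranspose_mul,
    Matrix.conjTranspose_conjTranspose, Matrix.conjTranspose_conjTranspose]
  calc U k ((1 - t) / 2) * (U k 1)ᴴ * (U k 1 * (U k ((1 + t) / 2))ᴴ)
      = U k ((1 - t) / 2) * ((U k 1)ᴴ * U k 1) * (U k ((1 + t) / 2))ᴴ := by
        simp [mul_assoc]
    _ = U k ((1 - t) / 2) * (U k ((1 + t) / 2))ᴴ := by rw [key1 1]; simp
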